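/- Under the Gaussian measurement error model X* = X + ε with ε ~ N(0, Σ_ε) independent of X, the error-corrected marginal distance variance satisfies dcov*(X*_k, X*_k) = dcov(X_k, X_k) for every coordinate k, where dcov* is computed using the corrected characteristic functions of X*_k. -/

import Mathlib

open MeasureTheory ProbabilityTheory

noncomputable def cConst (d : ℕ) : ℝ :=
  Real.pi ^ ((1 + (d : ℝ)) / 2) / Real.Gamma ((1 + (d : ℝ)) / 2)

noncomputable def w11 (r s : ℝ) : ℝ := (cConst 1 * cConst 1 * |r| ^ 2 * |s| ^ 2)⁻¹

noncomputable def phiR {Ω : Type*} [MeasureSpace Ω] (μ : Measure Ω) (U : Ω → ℝ) (r : ℝ) : ℂ :=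
  ∫ ω, Complex.exp (Complex.I * ((r * U ω : ℝ) : ℂ)) ∂μ

noncomputable def phiRR {Ω : Type*} [MeasureSpace Ω] (μ : Measure Ω) (U V : Ω → ℝ)
    (r s : ℝ) : ℂ :=
  ∫ ω, Complex.exp (Complex.I * ((r * U ω + s * V ω : ℝ) : ℂ)) ∂μ

/-- Ordinary squared distance covariance of two real random variables. -/
noncomputable def dcov2 {Ω : Type*} [MeasureSpace Ω] (μ : Measure Ω) (U V : Ω → ℝ) : ℝ :=
  ∫ r : ℝ, ∫ s : ℝ, ‖phiRR μ U V r s - phiR μ U r * phiR μ V s‖ ^ 2 * w11 r s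

/-- Error-corrected squared distance variance of a surrogate `X*_k`: the error appears in
both arguments, so the joint correction factor is `exp(σ² (r+s)²/2)` and each marginal
correction factor is `exp(σ² s²/2)`. -/
noncomputable def dcovStar2XX {Ω : Type*} [MeasureSpace Ω] (μ : Measure Ω) (W : Ω → ℝ)
    (σ2 : ℝ) : ℝ :=
  ∫ r : ℝ, ∫ s : ℝ,
    ‖phiRR μ W W r s * Complex.exp ((σ2 * (r + s) ^ 2 / 2 : ℝ) : ℂ)
        - (phiR μ W r * Complex.exp ((σ2 * r ^ 2 / 2 : ℝ) : ℂ)) *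
          (phiR μ W s * Complex.exp ((σ2 * s ^ 2 / 2 : ℝ) : ℂ))‖ ^ 2 * w11 r s


open Complex in
lemma charGauss (v : NNReal) (r : ℝ) :
    ∫ x : ℝ, Complex.exp (Complex.I * ((r * x : ℝ) : ℂ)) ∂(gaussianReal 0 v)
      = Complex.exp ((-(v * r ^ 2 / 2) : ℝ)) := by
  rcases eq_or_ne v 0 with hv | hv
  · subst hv
    simp [gaussianReal_zero_var, integral_dirac]
  · rw [gaussianReal_of_var_ne_zero _ hv]
    have hpdf : gaussianPDF 0 v = fun x => ((Real.toNNReal (gaussianPDFReal 0 v x) : NNReal) : ENNReal) := by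
      funext x; rfl
    rw [hpdf, integral_withDensity_eq_integral_smul
      ((measurable_gaussianPDFReal 0 v).real_toNNReal)
      (fun x => Complex.exp (Complex.I * ((r * x : ℝ) : ℂ)))]
    have hv' : (0:ℝ) < (v:ℝ) := by positivity
    have hvc : ((v:ℝ):ℂ) ≠ 0 := by exact_mod_cast hv'.ne'
    have hsq : (0:ℝ) < Real.sqrt (2 * Real.pi * v) := by positivity
    have key := fourierIntegral_gaussian (b := (1 / (2 * (v:ℝ)) : ℂ))
      (by simp; positivity) (r : ℂ)
    have heq : ∀ x : ℝ, (Real.toNNReal (gaussianPDFReal 0 v x) : NNReal) •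
        Complex.exp (Complex.I * ((r * x : ℝ) : ℂ))
        = ((Real.sqrt (2 * Real.pi * v) : ℝ) : ℂ)⁻¹ *
          (Complex.exp (Complex.I * (r:ℂ) * (x:ℂ)) *
            Complex.exp (-(1 / (2 * (v:ℝ)) : ℂ) * (x:ℂ) ^ 2)) := by
      intro x
      rw [NNReal.smul_def, Real.coe_toNNReal _ (gaussianPDFReal_nonneg 0 v x),
        gaussianPDFReal, real_smul]
      push_cast
      rw [mul_assoc]
      congr 1
      rw [← Complex.exp_add, ← Complex.exp_add]
      congr 1
      field_simp
      ring
    simp_rw [heq, integral_const_mul, key]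
    have hconst : ((Real.pi : ℂ) / (1 / (2 * (v:ℝ)) : ℂ)) ^ (1 / 2 : ℂ)
        = ((Real.sqrt (2 * Real.pi * v) : ℝ) : ℂ) := by
      have h1 : ((Real.pi : ℂ) / (1 / (2 * (v:ℝ)) : ℂ)) = ((2 * Real.pi * v : ℝ) : ℂ) := by
        push_cast; field_simp
      rw [h1, Real.sqrt_eq_rpow, Complex.ofReal_cpow (by positivity)]
      norm_num
    rw [hconst, ← mul_assoc, inv_mul_cancel₀ (by exact_mod_cast hsq.ne'), one_mul]
    congr 1
    push_cast
    field_simp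
    ring

lemma phiR_add {Ω : Type*} [MeasureSpace Ω] (μ : Measure Ω) [IsProbabilityMeasure μ]
    (Xk ek : Ω → ℝ) (hXk : Measurable Xk) (hek : Measurable ek)
    (v : NNReal) (hGauss : Measure.map ek μ = gaussianReal 0 v)
    (hindep : IndepFun ek Xk μ) (r : ℝ) :
    phiR μ (fun ω => Xk ω + ek ω) r = phiR μ Xk r * Complex.exp ((-(v * r ^ 2 / 2) : ℝ)) := by
  have hmap : μ.map (fun ω => (Xk ω, ek ω)) = (μ.map Xk).prod (μ.map ek) :=
    (indepFun_iff_map_prod_eq_prod_map_map hXk.aemeasurable hek.aemeasurable).mp hindep.symm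
  have m1 : ∀ t : ℝ, Measurable fun x : ℝ => Complex.exp (Complex.I * ((t * x : ℝ) : ℂ)) :=
    fun t => Complex.measurable_exp.comp (measurable_const.mul
      (Complex.measurable_ofReal.comp (measurable_const.mul measurable_id)))
  have hF : Measurable (fun p : ℝ × ℝ =>
      Complex.exp (Complex.I * ((r * p.1 : ℝ) : ℂ)) *
      Complex.exp (Complex.I * ((r * p.2 : ℝ) : ℂ))) :=
    ((m1 r).comp measurable_fst).mul ((m1 r).comp measurable_snd)
  have h1 : phiR μ (fun ω => Xk ω + ek ω) r
      = ∫ p : ℝ × ℝ, Complex.exp (Complex.I * ((r * p.1 : ℝ) : ℂ)) *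
          Complex.exp (Complex.I * ((r * p.2 : ℝ) : ℂ))
          ∂(μ.map (fun ω => (Xk ω, ek ω))) := by
    rw [integral_map (hXk.prodMk hek).aemeasurable hF.aestronglyMeasurable]
    unfold phiR
    congr 1
    funext ω
    rw [← Complex.exp_add]
    congr 1
    push_cast
    ring
  haveI : IsProbabilityMeasure (μ.map Xk) := Measure.isProbabilityMeasure_map hXk.aemeasurable
  haveI : IsProbabilityMeasure (μ.map ek) := Measure.isProbabilityMeasure_map hek.aemeasurable
  rw [h1, hmap,
    integral_prod_mul (f := fun x : ℝ => Complex.exp (Complex.I * ((r * x : ℝ) : ℂ)))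
      (g := fun x : ℝ => Complex.exp (Complex.I * ((r * x : ℝ) : ℂ))),
    hGauss, charGauss]
  congr 1
  rw [phiR, integral_map hXk.aemeasurable]
  exact (m1 r).aestronglyMeasurable

lemma phiRR_self {Ω : Type*} [MeasureSpace Ω] (μ : Measure Ω) (U : Ω → ℝ) (r s : ℝ) :
    phiRR μ U U r s = phiR μ U (r + s) := by
  unfold phiRR phiR
  congr 1
  funext ω
  congr 2
  push_cast
  ring

/-- Under the Gaussian measurement error model `X*_k = X_k + ε_k` with
`ε_k ~ N(0, σ²_k)` independent of `X_k`, the error-corrected marginal distance variance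
satisfies `dcov*(X*_k, X*_k) = dcov(X_k, X_k)`. -/
theorem dcovStar_marginal_eq
    {Ω : Type*} [MeasureSpace Ω] (μ : Measure Ω) [IsProbabilityMeasure μ]
    (Xk ek : Ω → ℝ) (hXk : Measurable Xk) (hek : Measurable ek)
    (v : NNReal)
    (hGauss : Measure.map ek μ = gaussianReal 0 v)
    (hindep : IndepFun ek Xk μ) :
    dcovStar2XX μ (fun ω => Xk ω + ek ω) (v : ℝ) = dcov2 μ Xk Xk := by
  set W : Ω → ℝ := fun ω => Xk ω + ek ω with hWdef
  have hW : ∀ t : ℝ, phiR μ W t * Complex.exp (((v : ℝ) * t ^ 2 / 2 : ℝ) : ℂ) = phiR μ Xk t := by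
    intro t
    rw [hWdef, phiR_add μ Xk ek hXk hek v hGauss hindep t, mul_assoc, ← Complex.exp_add,
      ← Complex.ofReal_add, neg_add_cancel, Complex.ofReal_zero, Complex.exp_zero, mul_one]
  have hJoint : ∀ r s : ℝ, phiRR μ W W r s *
      Complex.exp (((v : ℝ) * (r + s) ^ 2 / 2 : ℝ) : ℂ) = phiRR μ Xk Xk r s := by
    intro r s
    rw [phiRR_self, phiRR_self, hW (r + s)]
  unfold dcovStar2XX dcov2
  congr 1
  funext r
  congr 1
  funext s
  rw [hW r, hW s, hJoint r s]
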